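/- For every N ≥ 1, ε ∈ (0,1), and n > 0, n(1+ε)/(2N(1-ε)) + n ≤ n(1+ε^N)/(2(1-ε^N)) + n, i.e., the optimally-offset multiplexing scheme achieves average AoI no larger than the packet duplication scheme. -/

import Mathlib

lemma aux_pow (ε : ℝ) (hε : 0 ≤ ε) (hε1 : ε ≤ 1) :
    ∀ N : ℕ, (N : ℝ) * (1 - ε) * ε ^ N ≤ 1 - ε ^ N := by
  intro N
  induction N with
  | zero => simp
  | succ k ih =>
      have hp : 0 ≤ ε ^ k := pow_nonneg hε k
      have hp1 : ε ^ k ≤ 1 := pow_le_one₀ hε hε1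
      rw [pow_succ]
      push_cast
      nlinarith [mul_le_mul_of_nonneg_right ih hε, mul_nonneg (sub_nonneg.2 hε1) hp,
        mul_nonneg (mul_nonneg (sub_nonneg.2 hε1) hp) hε]

lemma key_ineq (ε : ℝ) (hε : 0 ≤ ε) (hε1 : ε ≤ 1) :
    ∀ N : ℕ, 1 ≤ N → (1 + ε) * (1 - ε ^ N) ≤ (N : ℝ) * (1 - ε) * (1 + ε ^ N) := by
  intro N
  induction N with
  | zero => omega
  | succ k ih =>
      intro _
      rcases Nat.eq_zero_or_pos k with hk | hk
      · subst hk; simp; nlinarith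
      · have IH := ih hk
        have haux := aux_pow ε hε hε1 k
        have hp : 0 ≤ ε ^ k := pow_nonneg hε k
        have hp1 : ε ^ k ≤ 1 := pow_le_one₀ hε hε1
        have hNk : (1 : ℝ) ≤ (k : ℝ) := by exact_mod_cast hk
        rw [pow_succ]
        push_cast
        nlinarith [mul_le_mul_of_nonneg_left haux (sub_nonneg.2 hε1)]

theorem mp_le_pd (N : ℕ) (hN : 1 ≤ N) (ε n : ℝ) (hε : 0 < ε) (hε1 : ε < 1) (hn : 0 < n) :
    n * (1 + ε) / (2 * N * (1 - ε)) + n ≤ n * (1 + ε ^ N) / (2 * (1 - ε ^ N)) + n := by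
  have hpN : ε ^ N < 1 := pow_lt_one₀ hε.le hε1 (by omega)
  have hNpos : (0 : ℝ) < N := by exact_mod_cast hN
  have h1e : (0 : ℝ) < 1 - ε := by linarith
  have hd1 : (0 : ℝ) < 2 * N * (1 - ε) := by positivity
  have hd2 : (0 : ℝ) < 2 * (1 - ε ^ N) := by linarith
  have key := key_ineq ε hε.le hε1.le N hN
  apply add_le_add_left
  rw [div_le_div_iff₀ hd1 hd2]
  nlinarith [mul_le_mul_of_nonneg_left key hn.le]
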